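/- arXiv:1605.07788 — 3 statements merged into one kernel-verified Lean document; each statement's English description precedes it below -/
import Mathlib

section
/- Let V be an n×n diagonal real matrix with positive diagonal entries v_j, B an n×n real matrix, and λ > v_max·‖B‖ where v_max = max_j v_j and ‖·‖ is the operator norm. Then the matrix λV^{-1} - B is invertible, and the limit as ε → 0⁺ of ε·(I - (I + εB)·E_{ελ})^{-1}, where E_{ελ} = diag(e^{-ελ/v_j}), equals (λI - VB)^{-1}·V. -/
open Filter Topology

attribute [local instance] Matrix.linftyOpNormedRing
attribute [local instance] Matrix.linftyOpNormedAlgebra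

lemma aux_smul_inv (n : ℕ) (c : ℝ) (hc : c ≠ 0) (M : Matrix (Fin n) (Fin n) ℝ) :
    (c • M)⁻¹ = c⁻¹ • M⁻¹ := by
  have h1 : (c • (1 : Matrix (Fin n) (Fin n) ℝ))⁻¹ = c⁻¹ • 1 := by
    apply Matrix.inv_eq_left_inv
    rw [smul_mul_assoc, Matrix.mul_smul, smul_smul, inv_mul_cancel₀ hc, one_smul, one_mul]
  rw [show c • M = (c • (1 : Matrix (Fin n) (Fin n) ℝ)) * M by
    rw [smul_mul_assoc, one_mul], Matrix.mul_inv_rev, h1, Matrix.mul_smul, mul_one]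

theorem matrix_resolvent_limit (n : ℕ) (hn : 0 < n) (v : Fin n → ℝ) (hv : ∀ j, 0 < v j)
    (B : Matrix (Fin n) (Fin n) ℝ) (lam : ℝ)
    (hlam : (⨆ j, v j) * ‖B‖ < lam) :
    IsUnit (lam • (Matrix.diagonal v)⁻¹ - B) ∧
      Tendsto
        (fun ε : ℝ =>
          ε • (1 - (1 + ε • B) * Matrix.diagonal fun j => Real.exp (-(ε * lam) / v j))⁻¹)
        (nhdsWithin 0 (Set.Ioi 0))
        (nhds ((lam • (1 : Matrix (Fin n) (Fin n) ℝ) - Matrix.diagonal v * B)⁻¹ *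
          Matrix.diagonal v)) := by
  haveI : NeZero n := ⟨hn.ne'⟩
  have hvne : ∀ j, v j ≠ 0 := fun j => (hv j).ne'
  set V := Matrix.diagonal v with hVdef
  have hdet : IsUnit V.det := by
    rw [hVdef, Matrix.det_diagonal]
    exact isUnit_iff_ne_zero.mpr (Finset.prod_ne_zero_iff.mpr fun j _ => hvne j)
  -- positivity of lam
  have hbdd : BddAbove (Set.range v) := (Set.finite_range v).bddAbove
  have hsup_pos : 0 < ⨆ j, v j :=
    lt_of_lt_of_le (hv ⟨0, hn⟩) (le_ciSup hbdd ⟨0, hn⟩)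
  have hlam0 : 0 < lam :=
    lt_of_le_of_lt (mul_nonneg hsup_pos.le (norm_nonneg B)) hlam
  -- norm bound
  have hnormV : ‖V‖ ≤ ⨆ j, v j := by
    rw [hVdef, Matrix.linfty_opNorm_diagonal]
    refine (pi_norm_le_iff_of_nonneg hsup_pos.le).mpr fun j => ?_
    rw [Real.norm_eq_abs, abs_of_pos (hv j)]
    exact le_ciSup hbdd j
  have hVB : ‖V * B‖ < lam :=
    lt_of_le_of_lt
      (le_trans (norm_mul_le V B) (mul_le_mul_of_nonneg_right hnormV (norm_nonneg B))) hlam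
  -- lam • 1 - V * B is a unit
  have hsmallnorm : ‖lam⁻¹ • (V * B)‖ < 1 := by
    rw [norm_smul, Real.norm_eq_abs, abs_of_pos (inv_pos.mpr hlam0)]
    calc lam⁻¹ * ‖V * B‖ < lam⁻¹ * lam :=
          mul_lt_mul_of_pos_left hVB (inv_pos.mpr hlam0)
      _ = 1 := inv_mul_cancel₀ hlam0.ne'
  have hUnit1 : IsUnit (lam • (1 : Matrix (Fin n) (Fin n) ℝ) - V * B) := by
    have hfac : lam • (1 : Matrix (Fin n) (Fin n) ℝ) - V * B
        = (lam • (1 : Matrix (Fin n) (Fin n) ℝ)) * (1 - lam⁻¹ • (V * B)) := by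
      rw [mul_sub, mul_one, smul_mul_assoc, one_mul, smul_smul,
        mul_inv_cancel₀ hlam0.ne', one_smul]
    rw [hfac]
    refine IsUnit.mul ?_ (Units.oneSub _ hsmallnorm).isUnit
    rw [← Algebra.algebraMap_eq_smul_one]
    exact (isUnit_iff_ne_zero.mpr hlam0.ne').map (algebraMap ℝ _)
  -- key factorization
  have hkey : lam • V⁻¹ - B = V⁻¹ * (lam • (1 : Matrix (Fin n) (Fin n) ℝ) - V * B) := by
    rw [mul_sub, Matrix.mul_smul, mul_one, ← Matrix.mul_assoc,
      Matrix.nonsing_inv_mul _ hdet, one_mul]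
  have hUnitA : IsUnit (lam • V⁻¹ - B) := by
    rw [hkey]
    exact (Matrix.isUnit_nonsing_inv_iff.mpr ((Matrix.isUnit_iff_isUnit_det V).mpr hdet)).mul
      hUnit1
  refine ⟨hUnitA, ?_⟩
  -- rewrite the target limit
  have htarget : (lam • (1 : Matrix (Fin n) (Fin n) ℝ) - V * B)⁻¹ * V = (lam • V⁻¹ - B)⁻¹ := by
    rw [hkey, Matrix.mul_inv_rev, Matrix.nonsing_inv_nonsing_inv _ hdet]
  rw [htarget]
  -- V⁻¹ is the diagonal of pointwise inverse
  have hVinv : V⁻¹ = Matrix.diagonal (fun j => (v j)⁻¹) := by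
    apply Matrix.inv_eq_left_inv
    rw [hVdef, Matrix.diagonal_mul_diagonal,
      show (fun j => (v j)⁻¹ * v j) = fun _ => (1 : ℝ) from
        funext fun j => inv_mul_cancel₀ (hvne j), Matrix.diagonal_one]
  have hA : lam • V⁻¹ - B = Matrix.diagonal (fun j => lam * (v j)⁻¹) - B := by
    rw [hVinv, show (fun j => lam * (v j)⁻¹) = lam • fun j => (v j)⁻¹ from rfl,
      Matrix.diagonal_smul]
  -- the auxiliary function
  set f : ℝ → Matrix (Fin n) (Fin n) ℝ := fun ε =>
    Matrix.diagonal (fun j => ε⁻¹ * (1 - Real.exp (-(ε * lam) / v j)))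
      - B * Matrix.diagonal (fun j => Real.exp (-(ε * lam) / v j)) with hfdef
  -- entrywise derivative computation
  have hdiag : ∀ j, Tendsto (fun ε : ℝ => ε⁻¹ * (1 - Real.exp (-(ε * lam) / v j)))
      (nhdsWithin 0 (Set.Ioi 0)) (nhds (lam * (v j)⁻¹)) := by
    intro j
    have hfun : (fun ε : ℝ => 1 - Real.exp (-(ε * lam) / v j))
        = fun ε : ℝ => 1 - Real.exp (ε * (-lam / v j)) := by
      funext ε; congr 1; congr 1; ring
    have hD : HasDerivAt (fun ε : ℝ => 1 - Real.exp (-(ε * lam) / v j)) (lam * (v j)⁻¹) 0 := by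
      rw [hfun]
      have h1 : HasDerivAt (fun ε : ℝ => ε * (-lam / v j)) (-lam / v j) 0 := by
        simpa using (hasDerivAt_id (0 : ℝ)).mul_const (-lam / v j)
      have h3 := (h1.exp).const_sub 1
      refine h3.congr_deriv ?_
      simp [div_eq_mul_inv]
    have hslope := hasDerivAt_iff_tendsto_slope.mp hD
    have hmono : Tendsto (slope (fun ε : ℝ => 1 - Real.exp (-(ε * lam) / v j)) 0)
        (nhdsWithin 0 (Set.Ioi 0)) (nhds (lam * (v j)⁻¹)) :=
      hslope.mono_left (nhdsWithin_mono 0 fun x hx => ne_of_gt hx)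
    refine hmono.congr fun ε => ?_
    simp [slope_def_field, div_eq_inv_mul]
  have hpi : Tendsto (fun ε : ℝ => fun j => ε⁻¹ * (1 - Real.exp (-(ε * lam) / v j)))
      (nhdsWithin 0 (Set.Ioi 0)) (nhds fun j => lam * (v j)⁻¹) :=
    tendsto_pi_nhds.mpr hdiag
  have htd : Tendsto (fun ε : ℝ =>
      Matrix.diagonal (fun j => ε⁻¹ * (1 - Real.exp (-(ε * lam) / v j))))
      (nhdsWithin 0 (Set.Ioi 0)) (nhds (Matrix.diagonal (fun j => lam * (v j)⁻¹))) :=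
    ((continuous_id.matrix_diagonal).tendsto _).comp hpi
  have hBEc : Continuous fun ε : ℝ =>
      B * Matrix.diagonal fun j => Real.exp (-(ε * lam) / v j) := by
    refine continuous_const.matrix_mul (Continuous.matrix_diagonal ?_)
    exact continuous_pi fun j => Real.continuous_exp.comp (by fun_prop)
  have hBE : Tendsto (fun ε : ℝ => B * Matrix.diagonal fun j => Real.exp (-(ε * lam) / v j))
      (nhdsWithin 0 (Set.Ioi 0)) (nhds B) := by
    have := (hBEc.tendsto 0).mono_left (nhdsWithin_le_nhds (s := Set.Ioi (0:ℝ)))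
    simpa using this
  have htendsto_f : Tendsto f (nhdsWithin 0 (Set.Ioi 0)) (nhds (lam • V⁻¹ - B)) := by
    rw [hA]; exact htd.sub hBE
  -- pass to inverses
  have hinv_cont : ContinuousAt Ring.inverse (lam • V⁻¹ - B) := by
    have := NormedRing.inverse_continuousAt hUnitA.unit
    rwa [hUnitA.unit_spec] at this
  have htendsto_inv : Tendsto (fun ε => (f ε)⁻¹) (nhdsWithin 0 (Set.Ioi 0))
      (nhds (lam • V⁻¹ - B)⁻¹) := by
    have := hinv_cont.tendsto.comp htendsto_f
    simpa [Matrix.nonsing_inv_eq_ringInverse, Function.comp_def] using this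
  -- eventual equality on Ioi 0
  refine htendsto_inv.congr' ?_
  filter_upwards [self_mem_nhdsWithin] with ε (hε : ε ∈ Set.Ioi 0)
  have hεne : ε ≠ 0 := ne_of_gt hε
  have hX : f ε = ε⁻¹ • (1 - (1 + ε • B) * Matrix.diagonal fun j => Real.exp (-(ε * lam) / v j)) := by
    rw [add_mul, one_mul, smul_mul_assoc, sub_add_eq_sub_sub, smul_sub, smul_sub, smul_smul,
      inv_mul_cancel₀ hεne, one_smul, hfdef]
    ext i k
    by_cases h : i = k <;> simp [Matrix.diagonal_apply, h, mul_sub]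
  rw [hX, aux_smul_inv n ε⁻¹ (inv_ne_zero hεne), inv_inv]
end

section
/- Let b ∈ ℝ and g ∈ L¹([0,1]). Define v_k(x) = (1 + 2b/(2k+1))^{k+1}·g(x + 1/2) for x ∈ [0,1/2) and v_k(x) = (1 + 2b/(2k+1))^k·g(x − 1/2) for x ∈ [1/2,1]. Then v_k converges in L¹([0,1]) to e^b·h, where h(x) = g(x+1/2) on [0,1/2) and h(x) = g(x−1/2) on [1/2,1]. In particular, if g is not a.e. equal to h, the two subsequential limits e^b·g (along ε = 1/k) and e^b·h (along ε = 2/(2k+1)) differ, so the family of transport semigroups does not converge for all initial data. -/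
open Filter Topology MeasureTheory

private lemma key_lim (b : ℝ) :
    Tendsto (fun k : ℕ => (1 + 2 * b / (2 * (k:ℝ) + 1)) ^ k) atTop (𝓝 (Real.exp b)) := by
  have hden : Tendsto (fun k : ℕ => (k:ℝ) + 1/2) atTop atTop :=
    tendsto_atTop_add_const_right atTop (1/2) tendsto_natCast_atTop_atTop
  have heq : ∀ k : ℕ, b / ((k:ℝ) + 1/2) = 2 * b / (2 * (k:ℝ) + 1) := by
    intro k
    have : (2 * (k:ℝ) + 1) ≠ 0 := by positivity
    field_simp
  have hu : Tendsto (fun k : ℕ => 2 * b / (2 * (k:ℝ) + 1)) atTop (𝓝 0) := by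
    apply Tendsto.div_atTop (tendsto_const_nhds (x := 2 * b))
    exact tendsto_atTop_add_const_right atTop 1
      (tendsto_natCast_atTop_atTop.const_mul_atTop (by norm_num))
  have hbase : Tendsto (fun k : ℕ => 1 + 2 * b / (2 * (k:ℝ) + 1)) atTop (𝓝 1) := by
    simpa using (tendsto_const_nhds (x := (1:ℝ))).add hu
  have hlog : Tendsto (fun k : ℕ => Real.log (1 + 2 * b / (2 * (k:ℝ) + 1))) atTop (𝓝 0) := by
    have := (Real.continuousAt_log (x := 1) (by norm_num)).tendsto.comp hbase
    simpa [Function.comp_def] using this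
  have T1 : Tendsto (fun k : ℕ => ((k:ℝ) + 1/2) * Real.log (1 + 2 * b / (2 * (k:ℝ) + 1)))
      atTop (𝓝 b) := by
    have := (Real.tendsto_mul_log_one_add_div_atTop b).comp hden
    simp only [Function.comp_def] at this
    exact this.congr fun k => by rw [heq]
  have T2 : Tendsto (fun k : ℕ => (k:ℝ) * Real.log (1 + 2 * b / (2 * (k:ℝ) + 1)))
      atTop (𝓝 b) := by
    have := T1.sub (hlog.const_mul (1/2))
    simp only [mul_zero, sub_zero] at this
    refine this.congr fun k => ?_
    ring
  have T3 : Tendsto (fun k : ℕ => Real.exp ((k:ℝ) * Real.log (1 + 2 * b / (2 * (k:ℝ) + 1))))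
      atTop (𝓝 (Real.exp b)) := (Real.continuous_exp.tendsto b).comp T2
  have hev : ∀ᶠ k : ℕ in atTop,
      Real.exp ((k:ℝ) * Real.log (1 + 2 * b / (2 * (k:ℝ) + 1)))
        = (1 + 2 * b / (2 * (k:ℝ) + 1)) ^ k := by
    filter_upwards [hu.eventually (eventually_gt_nhds (by norm_num : (-1:ℝ) < 0))] with k hk2
    have hpos : 0 < 1 + 2 * b / (2 * (k:ℝ) + 1) := by linarith
    rw [Real.exp_nat_mul, Real.exp_log hpos]
  exact Tendsto.congr' hev T3

theorem counterexample_subsequence (b : ℝ) (g : ℝ → ℝ)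
    (hg : IntegrableOn g (Set.Icc (-(1:ℝ)) 2))
    (h : ℝ → ℝ)
    (hh : h = fun x => if x < 1/2 then g (x + 1/2) else g (x - 1/2))
    (v : ℕ → ℝ → ℝ)
    (hv : v = fun (k : ℕ) (x : ℝ) =>
      if x < 1/2 then (1 + 2 * b / (2 * (k:ℝ) + 1)) ^ (k + 1) * g (x + 1/2)
      else (1 + 2 * b / (2 * (k:ℝ) + 1)) ^ k * g (x - 1/2)) :
    Tendsto (fun k : ℕ => ∫ x in Set.Icc (0:ℝ) 1, |v k x - Real.exp b * h x|)
      atTop (nhds 0) ∧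
    (¬ (∀ᵐ x ∂(volume.restrict (Set.Icc (0:ℝ) 1)), g x = h x) →
      ¬ (∀ᵐ x ∂(volume.restrict (Set.Icc (0:ℝ) 1)),
        Real.exp b * g x = Real.exp b * h x)) := by
  constructor
  · -- limits of the coefficients
    set c : ℕ → ℝ := fun k => 1 + 2 * b / (2 * (k:ℝ) + 1) with hc
    have hB : Tendsto (fun k : ℕ => c k ^ k) atTop (𝓝 (Real.exp b)) := key_lim b
    have hu : Tendsto (fun k : ℕ => 2 * b / (2 * (k:ℝ) + 1)) atTop (𝓝 0) := by
      apply Tendsto.div_atTop (tendsto_const_nhds (x := 2 * b))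
      exact tendsto_atTop_add_const_right atTop 1
        (tendsto_natCast_atTop_atTop.const_mul_atTop (by norm_num))
    have hbase : Tendsto c atTop (𝓝 1) := by
      simpa using (tendsto_const_nhds (x := (1:ℝ))).add hu
    have hA : Tendsto (fun k : ℕ => c k ^ (k + 1)) atTop (𝓝 (Real.exp b)) := by
      have := hB.mul hbase
      simpa [pow_succ] using this
    set D : ℕ → ℝ := fun k => |c k ^ (k + 1) - Real.exp b| + |c k ^ k - Real.exp b| with hD
    have hDlim : Tendsto D atTop (𝓝 0) := by
      have h1 : Tendsto (fun k : ℕ => |c k ^ (k + 1) - Real.exp b|) atTop (𝓝 0) := by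
        have := (hA.sub (tendsto_const_nhds (x := Real.exp b))).abs
        simpa using this
      have h2 : Tendsto (fun k : ℕ => |c k ^ k - Real.exp b|) atTop (𝓝 0) := by
        have := (hB.sub (tendsto_const_nhds (x := Real.exp b))).abs
        simpa using this
      simpa using h1.add h2
    -- integrability of h on [0,1]
    have hgI : IntervalIntegrable g volume (-1) 2 :=
      (intervalIntegrable_iff_integrableOn_Icc_of_le (by norm_num)).mpr hg
    have hplus : IntegrableOn (fun x => g (x + 1/2)) (Set.Icc (0:ℝ) (1/2)) := by
      have h1 : IntervalIntegrable (fun x => g (x + 1/2)) volume (-1 - 1/2) (2 - 1/2) :=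
        hgI.comp_add_right (1/2)
      have h2 : IntervalIntegrable (fun x => g (x + 1/2)) volume 0 (1/2) := by
        refine h1.mono_set ?_
        rw [Set.uIcc_of_le (by norm_num), Set.uIcc_of_le (by norm_num)]
        exact Set.Icc_subset_Icc (by norm_num) (by norm_num)
      exact (intervalIntegrable_iff_integrableOn_Icc_of_le (by norm_num)).mp h2
    have hminus : IntegrableOn (fun x => g (x - 1/2)) (Set.Icc (1/2:ℝ) 1) := by
      have h1 : IntervalIntegrable (fun x => g (x - 1/2)) volume (-1 + 1/2) (2 + 1/2) :=
        hgI.comp_sub_right (1/2)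
      have h2 : IntervalIntegrable (fun x => g (x - 1/2)) volume (1/2) 1 := by
        refine h1.mono_set ?_
        rw [Set.uIcc_of_le (by norm_num), Set.uIcc_of_le (by norm_num)]
        exact Set.Icc_subset_Icc (by norm_num) (by norm_num)
      exact (intervalIntegrable_iff_integrableOn_Icc_of_le (by norm_num)).mp h2
    have hhalf : (volume : Measure ℝ) {(1/2 : ℝ)} = 0 := measure_singleton _
    have hhI1 : IntegrableOn h (Set.Icc (0:ℝ) (1/2)) := by
      refine hplus.congr_fun_ae ?_
      have hae : ∀ᵐ x ∂(volume : Measure ℝ), x ≠ (1/2 : ℝ) := by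
        rw [ae_iff]
        simpa using hhalf
      filter_upwards [ae_restrict_of_ae hae,
        ae_restrict_mem measurableSet_Icc] with x hx hx2
      have hxlt : x < 1/2 := lt_of_le_of_ne hx2.2 hx
      simp only [hh]
      rw [if_pos hxlt]
    have hhI2 : IntegrableOn h (Set.Icc (1/2:ℝ) 1) := by
      refine hminus.congr_fun ?_ measurableSet_Icc
      intro x hx
      have hxge : ¬ x < 1/2 := not_lt.mpr hx.1
      simp only [hh]
      rw [if_neg hxge]
    have hhI : IntegrableOn h (Set.Icc (0:ℝ) 1) := by
      have := hhI1.union hhI2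
      refine this.mono_set ?_
      rw [Set.Icc_union_Icc_eq_Icc (by norm_num) (by norm_num)]
    have habs : IntegrableOn (fun x => |h x|) (Set.Icc (0:ℝ) 1) := hhI.abs
    set C : ℝ := ∫ x in Set.Icc (0:ℝ) 1, |h x| with hC
    -- squeeze
    have hlow : ∀ k : ℕ, (0:ℝ) ≤ ∫ x in Set.Icc (0:ℝ) 1, |v k x - Real.exp b * h x| :=
      fun k => integral_nonneg fun x => abs_nonneg _
    have hbound : ∀ k : ℕ,
        (∫ x in Set.Icc (0:ℝ) 1, |v k x - Real.exp b * h x|) ≤ D k * C := by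
      intro k
      have hDnn : 0 ≤ D k := add_nonneg (abs_nonneg _) (abs_nonneg _)
      have hint : Integrable (fun x => D k * |h x|) (volume.restrict (Set.Icc (0:ℝ) 1)) :=
        habs.const_mul (D k)
      have hle : ∀ x, |v k x - Real.exp b * h x| ≤ D k * |h x| := by
        intro x
        subst hh hv
        by_cases hx : x < 1/2
        · simp only [hx, if_true]
          rw [← sub_mul, abs_mul]
          exact mul_le_mul_of_nonneg_right (le_add_of_nonneg_right (abs_nonneg _))
            (abs_nonneg _)
        · simp only [hx, if_false]
          rw [← sub_mul, abs_mul]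
          exact mul_le_mul_of_nonneg_right (le_add_of_nonneg_left (abs_nonneg _))
            (abs_nonneg _)
      calc (∫ x in Set.Icc (0:ℝ) 1, |v k x - Real.exp b * h x|)
          ≤ ∫ x in Set.Icc (0:ℝ) 1, D k * |h x| := by
            refine integral_mono_of_nonneg ?_ hint ?_
            · exact Eventually.of_forall fun x => abs_nonneg _
            · exact Eventually.of_forall fun x => hle x
        _ = D k * C := by rw [hC, integral_const_mul]
    have hup : Tendsto (fun k : ℕ => D k * C) atTop (𝓝 0) := by
      simpa using hDlim.mul_const C
    exact tendsto_of_tendsto_of_tendsto_of_le_of_le tendsto_const_nhds hup hlow hbound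
  · intro hne hcontra
    apply hne
    filter_upwards [hcontra] with x hx
    exact mul_left_cancel₀ (Real.exp_ne_zero b) hx
end

section
/- Let v > 0, b ∈ ℝ, and for ε > 0 define the scalar function r(ε, λ) = ε·(1 − (1+εb)e^{-ελ/v})^{-1}·(1+εb)·v^{-1}·∫₀¹ e^{ελ(s−1)/v} f(s) ds for f ∈ L¹([0,1]) and λ > v·|b|. Then lim_{ε→0⁺} r(ε,λ) = (λ − vb)^{-1}·∫₀¹ f(s) ds. -/
open Filter Topology MeasureTheory

theorem boundary_constant_limit (v b : ℝ) (hv : 0 < v) (lam : ℝ) (hlam : v * |b| < lam)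
    (f : ℝ → ℝ) (hf : IntegrableOn f (Set.Icc 0 1)) :
    Tendsto
      (fun ε : ℝ =>
        ε * (1 - (1 + ε * b) * Real.exp (-(ε * lam) / v))⁻¹ * (1 + ε * b) * v⁻¹ *
          ∫ s in (0:ℝ)..1, Real.exp (ε * lam * (s - 1) / v) * f s)
      (nhdsWithin 0 (Set.Ioi 0))
      (nhds ((lam - v * b)⁻¹ * ∫ s in (0:ℝ)..1, f s)) := by
  have hv0 : v ≠ 0 := ne_of_gt hv
  have hlam0 : 0 < lam := lt_of_le_of_lt (by positivity) hlam
  have hvb : v * b < lam := lt_of_le_of_lt (by nlinarith [le_abs_self b]) hlam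
  have hd : (0:ℝ) < lam / v - b := by
    rw [sub_pos, lt_div_iff₀ hv]; linarith [hvb]
  set h : ℝ → ℝ := fun ε => 1 - (1 + ε * b) * Real.exp (-(ε * lam) / v) with hh
  -- derivative of h at 0
  have hderiv : HasDerivAt h (lam / v - b) 0 := by
    have h1 : HasDerivAt (fun ε : ℝ => 1 + ε * b) b 0 := by
      simpa using ((hasDerivAt_id (0:ℝ)).mul_const b).const_add 1
    have h2 : HasDerivAt (fun ε : ℝ => -(ε * lam) / v) (-(lam / v)) 0 := by
      have heq2 : (fun ε : ℝ => -(ε * lam) / v) = fun ε : ℝ => ε * (-(lam / v)) := by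
        funext ε; ring
      rw [heq2]
      simpa using (hasDerivAt_id (0:ℝ)).mul_const (-(lam / v))
    have h3 : HasDerivAt (fun ε : ℝ => Real.exp (-(ε * lam) / v)) (-(lam / v)) 0 := by
      have := h2.exp
      simpa using this
    have h4 := h1.mul h3
    have h5 := h4.const_sub 1
    have e : lam / v - b = -(b * Real.exp (-(0 * lam) / v) + (1 + 0 * b) * -(lam / v)) := by
      simp [Real.exp_zero]
      ring
    rw [e]; exact h5
  have hslope : Tendsto (fun ε => h ε / ε) (nhdsWithin 0 (Set.Ioi 0)) (nhds (lam / v - b)) := by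
    have := hasDerivAt_iff_tendsto_slope.1 hderiv
    have hsub : Set.Ioi (0:ℝ) ⊆ {0}ᶜ := fun x hx => ne_of_gt hx
    have h2 := this.mono_left (nhdsWithin_mono 0 hsub)
    refine h2.congr (fun ε => ?_)
    simp [slope, hh, Real.exp_zero, div_eq_inv_mul]
  have hfac : Tendsto (fun ε => ε * (h ε)⁻¹) (nhdsWithin 0 (Set.Ioi 0))
      (nhds ((lam / v - b)⁻¹)) := by
    have h2 := hslope.inv₀ (ne_of_gt hd)
    refine h2.congr' ?_
    filter_upwards [self_mem_nhdsWithin] with ε (hε : 0 < ε)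
    rw [div_eq_mul_inv, mul_inv, inv_inv, mul_comm]
  have hlin : Tendsto (fun ε : ℝ => 1 + ε * b) (nhdsWithin 0 (Set.Ioi 0)) (nhds 1) := by
    have : Tendsto (fun ε : ℝ => 1 + ε * b) (nhds 0) (nhds (1 + 0 * b)) := by
      exact (continuous_const.add (continuous_id.mul continuous_const)).tendsto 0
    simpa using this.mono_left nhdsWithin_le_nhds
  -- integral convergence
  have hfIoc : IntegrableOn f (Set.Ioc 0 1) := hf.mono_set Set.Ioc_subset_Icc_self
  have hint : Tendsto (fun ε : ℝ => ∫ s in (0:ℝ)..1, Real.exp (ε * lam * (s - 1) / v) * f s)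
      (nhdsWithin 0 (Set.Ioi 0)) (nhds (∫ s in (0:ℝ)..1, f s)) := by
    have e1 : ∀ ε : ℝ, (∫ s in (0:ℝ)..1, Real.exp (ε * lam * (s - 1) / v) * f s)
        = ∫ s in Set.Ioc (0:ℝ) 1, Real.exp (ε * lam * (s - 1) / v) * f s := fun ε =>
      intervalIntegral.integral_of_le (by norm_num)
    have e2 : (∫ s in (0:ℝ)..1, f s) = ∫ s in Set.Ioc (0:ℝ) 1, f s :=
      intervalIntegral.integral_of_le (by norm_num)
    rw [e2]
    simp_rw [e1]
    apply MeasureTheory.tendsto_integral_filter_of_dominated_convergence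
      (fun s => ‖f s‖)
    · filter_upwards with ε
      exact (Continuous.aestronglyMeasurable (by continuity)).mul hfIoc.aestronglyMeasurable
    · filter_upwards [self_mem_nhdsWithin] with ε (hε : 0 < ε)
      rw [ae_restrict_iff' measurableSet_Ioc]
      filter_upwards with s hs
      have hs1 : s - 1 ≤ 0 := by simp [hs.2]
      have hexp : Real.exp (ε * lam * (s - 1) / v) ≤ 1 := by
        apply Real.exp_le_one_iff.2
        apply div_nonpos_of_nonpos_of_nonneg _ (le_of_lt hv)
        nlinarith [mul_pos hε hlam0]
      rw [norm_mul]
      calc ‖Real.exp (ε * lam * (s - 1) / v)‖ * ‖f s‖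
          ≤ 1 * ‖f s‖ := by
            apply mul_le_mul_of_nonneg_right _ (norm_nonneg _)
            rw [Real.norm_eq_abs, abs_of_pos (Real.exp_pos _)]
            exact hexp
        _ = ‖f s‖ := one_mul _
    · exact hfIoc.norm
    · filter_upwards with s
      have : Tendsto (fun ε : ℝ => Real.exp (ε * lam * (s - 1) / v) * f s) (nhds 0)
          (nhds (Real.exp (0 * lam * (s - 1) / v) * f s)) := by
        exact ((Real.continuous_exp.comp (by continuity)).mul continuous_const).tendsto 0
      simpa using this.mono_left nhdsWithin_le_nhds
  have hfinal : Tendsto (fun ε => ε * (h ε)⁻¹ * (1 + ε * b) * v⁻¹ *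
      ∫ s in (0:ℝ)..1, Real.exp (ε * lam * (s - 1) / v) * f s) (nhdsWithin 0 (Set.Ioi 0))
      (nhds ((lam / v - b)⁻¹ * 1 * v⁻¹ * ∫ s in (0:ℝ)..1, f s)) :=
    ((hfac.mul hlin).mul tendsto_const_nhds).mul hint
  have heq : (lam / v - b)⁻¹ * 1 * v⁻¹ * ∫ s in (0:ℝ)..1, f s
      = (lam - v * b)⁻¹ * ∫ s in (0:ℝ)..1, f s := by
    rw [mul_one]
    congr 1
    rw [← mul_inv]
    congr 1
    field_simp
  rw [← heq]
  exact hfinal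
end
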